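/- Let f : ℝ → ℝ be continuously differentiable and (L,p)-Hölder smooth for some L ≥ 0, p > 0; let α ∈ (0,1) and x, c ∈ ℝ with x ≠ c. Then |f′(x)(x−c)/(Γ(2−α)·|x−c|^α) − D^α_c f(x)| ≤ (L/(Γ(1−α)·(1+p−α))) · |x−c|^{1+p−α}. -/

import Mathlib

/-- The Caputo fractional derivative of order `α ∈ (0,1)` with terminal `c`. -/
noncomputable def caputo (α c : ℝ) (f : ℝ → ℝ) (x : ℝ) : ℝ :=
  (1 / Real.Gamma (1 - α)) * ∫ t in c..x, deriv f t / |x - t| ^ α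

/-- `f : ℝ → ℝ` is `(L,p)`-Hölder smooth. -/
def HolderSmooth (L p : ℝ) (f : ℝ → ℝ) : Prop :=
  ∀ x y : ℝ, |f y - f x - deriv f x * (y - x)| ≤ L / (1 + p) * |y - x| ^ (1 + p)

open MeasureTheory intervalIntegral Set Filter Topology

lemma integral_sub_rpow (c x r : ℝ) (hr : -1 < r) :
    ∫ t in c..x, (x - t) ^ r = (x - c) ^ (r + 1) / (r + 1) := by
  have h := intervalIntegral.integral_comp_sub_left (a := c) (b := x) (fun u => u ^ r) x
  rw [h, sub_self]
  rw [integral_rpow (Or.inl hr), Real.zero_rpow (by linarith), sub_zero]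

lemma integrable_sub_rpow (c x r : ℝ) (hr : -1 < r) :
    IntervalIntegrable (fun t => (x - t) ^ r) volume c x := by
  have := (intervalIntegral.intervalIntegrable_rpow' (a := x - c) (b := x - x) hr).comp_sub_left x
  simpa using this

lemma key_lemma (f : ℝ → ℝ) (hf : ContDiff ℝ 1 f)
    (L p : ℝ) (hL : 0 ≤ L) (hp : 0 < p) (hsmooth : HolderSmooth L p f)
    (α : ℝ) (hα : α ∈ Set.Ioo (0 : ℝ) 1) (x c : ℝ) (hcx : c < x) :
    |deriv f x * (x - c) / (Real.Gamma (2 - α) * |x - c| ^ α) - caputo α c f x| ≤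
      L / (Real.Gamma (1 - α) * (1 + p - α)) * |x - c| ^ (1 + p - α) := by
  obtain ⟨hα0, hα1⟩ := hα
  have hd : Differentiable ℝ f := hf.differentiable one_ne_zero
  have hcd : Continuous (deriv f) := hf.continuous_deriv le_rfl
  have hxc0 : (0:ℝ) < x - c := sub_pos.2 hcx
  have habs : |x - c| = x - c := abs_of_pos hxc0
  have hΓpos : 0 < Real.Gamma (1 - α) := Real.Gamma_pos_of_pos (by linarith)
  have hpa : (0:ℝ) < 1 + p - α := by linarith
  set C := L / (1 + p) with hCdef
  have hC : 0 ≤ C := div_nonneg hL (by linarith)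
  set g : ℝ → ℝ := fun t => f t - f x - deriv f x * (t - x) with hgdef
  have hg_bound : ∀ t, |g t| ≤ C * |t - x| ^ (1 + p) := fun t => hsmooth x t
  have hgx : g x = 0 := by simp [hgdef]
  have hgD : ∀ t, HasDerivAt g (deriv f t - deriv f x) t := by
    intro t
    have h1 : HasDerivAt (fun t => f t - f x) (deriv f t) t :=
      (hd t).hasDerivAt.sub_const (f x)
    have h2 : HasDerivAt (fun t : ℝ => deriv f x * (t - x)) (deriv f x) t := by
      simpa using ((hasDerivAt_id t).sub_const x).const_mul (deriv f x)
    exact h1.sub h2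
  have hgcont : Continuous g := by
    apply Continuous.sub
    · exact (hf.continuous).sub continuous_const
    · exact continuous_const.mul (continuous_id.sub continuous_const)
  -- integrabilities
  have Iψ : IntervalIntegrable (fun t => (x - t) ^ (-α)) volume c x :=
    integrable_sub_rpow c x (-α) (by linarith)
  have Iρ : IntervalIntegrable (fun t => (x - t) ^ (p - α)) volume c x :=
    integrable_sub_rpow c x (p - α) (by linarith)
  have IρC : IntervalIntegrable (fun t => C * (x - t) ^ (p - α)) volume c x := Iρ.const_mul C
  have Ih1 : IntervalIntegrable (fun t => (deriv f x - deriv f t) * (x - t) ^ (-α)) volume c x := by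
    have := Iψ.continuousOn_mul (g := fun t => deriv f x - deriv f t)
      ((continuous_const.sub hcd).continuousOn)
    exact this
  have If2 : IntervalIntegrable (fun t => deriv f t * (x - t) ^ (-α)) volume c x :=
    Iψ.continuousOn_mul hcd.continuousOn
  have If1 : IntervalIntegrable (fun t => deriv f x * (x - t) ^ (-α)) volume c x :=
    Iψ.const_mul _
  have hg_le : ∀ t ∈ Set.Ioc c x, |g t * (x - t) ^ (-α - 1)| ≤ C * (x - t) ^ (p - α) := by
    intro t ht
    rcases eq_or_lt_of_le ht.2 with rfl | htx
    · simp [hgx, Real.zero_rpow, hC, Real.rpow_natCast]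
      positivity
    · have hxt : (0:ℝ) < x - t := sub_pos.2 htx
      rw [abs_mul, abs_of_pos (Real.rpow_pos_of_pos hxt _)]
      have : |t - x| = x - t := by rw [abs_sub_comm]; exact abs_of_pos hxt
      calc |g t| * (x - t) ^ (-α - 1) ≤ (C * (x - t) ^ (1 + p)) * (x - t) ^ (-α - 1) := by
            apply mul_le_mul_of_nonneg_right _ (Real.rpow_pos_of_pos hxt _).le
            simpa [this] using hg_bound t
        _ = C * (x - t) ^ (p - α) := by
            rw [mul_assoc, ← Real.rpow_add hxt]; ring_nf
  have Ih2 : IntervalIntegrable (fun t => g t * (x - t) ^ (-α - 1)) volume c x := by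
    apply IρC.mono_fun'
    · rw [uIoc_of_le hcx.le, ← Measure.restrict_congr_set Ioo_ae_eq_Ioc]
      apply ContinuousOn.aestronglyMeasurable _ measurableSet_Ioo
      intro t ht
      apply ContinuousWithinAt.mul (hgcont.continuousWithinAt)
      have : ContinuousAt (fun t : ℝ => (x - t) ^ (-α - 1)) t :=
        ContinuousAt.comp (x := t) (g := fun u : ℝ => u ^ (-α - 1))
          (Real.continuousAt_rpow_const _ _ (Or.inl (ne_of_gt (sub_pos.2 ht.2))))
          ((continuous_const.sub continuous_id).continuousAt)
      exact this.continuousWithinAt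
    · rw [Filter.EventuallyLE, ae_restrict_iff' measurableSet_uIoc]
      apply ae_of_all
      intro t ht
      rw [uIoc_of_le hcx.le] at ht
      exact hg_le t ht
  -- primitives
  set Φ : ℝ → ℝ := fun b => ∫ t in c..b, (deriv f x - deriv f t) * (x - t) ^ (-α) with hΦdef
  set Ψ : ℝ → ℝ := fun b => ∫ t in c..b, g t * (x - t) ^ (-α - 1) with hΨdef
  have step : ∀ b ∈ Set.Ico c x,
      Φ b - α * Ψ b = g c * (x - c) ^ (-α) - g b * (x - b) ^ (-α) := by
    intro b hb
    have hbx : b < x := hb.2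
    have hcb : c ≤ b := hb.1
    have hsub : Set.uIcc c b ⊆ Set.uIcc c x := by
      rw [uIcc_of_le hcb, uIcc_of_le hcx.le]; exact Icc_subset_Icc_right hbx.le
    have hder : ∀ t ∈ Set.uIcc c b,
        HasDerivAt (fun t => -(g t * (x - t) ^ (-α)))
          ((deriv f x - deriv f t) * (x - t) ^ (-α) - α * (g t * (x - t) ^ (-α - 1))) t := by
      intro t ht
      rw [uIcc_of_le hcb] at ht
      have hxt : (0:ℝ) < x - t := sub_pos.2 (lt_of_le_of_lt ht.2 hbx)
      have hψ : HasDerivAt (fun t : ℝ => (x - t) ^ (-α)) (α * (x - t) ^ (-α - 1)) t := by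
        have h := (((hasDerivAt_id t).const_sub x)).rpow_const (p := -α) (Or.inl hxt.ne')
        convert h using 1
        simp only [id_eq]
        ring_nf
        rfl
      have h2 : HasDerivAt (fun t => -(g t * (x - t) ^ (-α)))
          (-((deriv f t - deriv f x) * (x - t) ^ (-α) + g t * (α * (x - t) ^ (-α - 1)))) t :=
        ((hgD t).mul hψ).neg
      convert h2 using 1
      ring
    have hint : IntervalIntegrable (fun t => (deriv f x - deriv f t) * (x - t) ^ (-α)
        - α * (g t * (x - t) ^ (-α - 1))) volume c b :=
      (Ih1.mono_set hsub).sub ((Ih2.mono_set hsub).const_mul α)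
    have hftc := intervalIntegral.integral_eq_sub_of_hasDerivAt hder hint
    rw [intervalIntegral.integral_sub (Ih1.mono_set hsub)
      ((Ih2.mono_set hsub).const_mul α), intervalIntegral.integral_const_mul] at hftc
    simp only [hΦdef, hΨdef]
    rw [hftc]; ring
  -- limits
  have hIoo : Set.Ioo c x ∈ 𝓝[<] x := Ioo_mem_nhdsLT_of_mem ⟨hcx, le_rfl⟩
  have hleq : 𝓝[Set.Iio x] x = 𝓝[Set.Ioo c x] x :=
    (nhdsWithin_Ioo_eq_nhdsLT hcx).symm
  have hmono : 𝓝[Set.Iio x] x ≤ 𝓝[Set.uIcc c x] x := by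
    rw [hleq]
    exact nhdsWithin_mono _ (by rw [uIcc_of_le hcx.le]; exact Set.Ioo_subset_Icc_self)
  have tendstoΦ : Tendsto Φ (𝓝[<] x) (𝓝 (Φ x)) :=
    ((intervalIntegral.continuousOn_primitive_interval' Ih1 left_mem_uIcc) x
      right_mem_uIcc).mono_left hmono
  have tendstoΨ : Tendsto Ψ (𝓝[<] x) (𝓝 (Ψ x)) :=
    ((intervalIntegral.continuousOn_primitive_interval' Ih2 left_mem_uIcc) x
      right_mem_uIcc).mono_left hmono
  have tendsto0 : Tendsto (fun b => g b * (x - b) ^ (-α)) (𝓝[<] x) (𝓝 0) := by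
    have t1 : Tendsto (fun b : ℝ => x - b) (𝓝[<] x) (𝓝 0) := by
      have h := (continuous_const.sub continuous_id : Continuous fun b : ℝ => x - b).tendsto x
      simp only [Pi.sub_apply, sub_self] at h
      exact h.mono_left nhdsWithin_le_nhds
    have t2 : Tendsto (fun b : ℝ => (x - b) ^ (1 + p - α)) (𝓝[<] x) (𝓝 0) := by
      have hc := (Real.continuousAt_rpow_const 0 (1 + p - α) (Or.inr hpa.le)).tendsto.comp t1
      rwa [Real.zero_rpow hpa.ne'] at hc
    have t3 : Tendsto (fun b : ℝ => C * (x - b) ^ (1 + p - α)) (𝓝[<] x) (𝓝 0) := by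
      simpa using t2.const_mul C
    apply squeeze_zero_norm' _ t3
    filter_upwards [hIoo] with b hb
    have hxb : (0:ℝ) < x - b := sub_pos.2 hb.2
    have habsb : |b - x| = x - b := by rw [abs_sub_comm]; exact abs_of_pos hxb
    rw [Real.norm_eq_abs, abs_mul, abs_of_pos (Real.rpow_pos_of_pos hxb _)]
    calc |g b| * (x - b) ^ (-α) ≤ (C * (x - b) ^ (1 + p)) * (x - b) ^ (-α) := by
          apply mul_le_mul_of_nonneg_right _ (Real.rpow_pos_of_pos hxb _).le
          simpa [habsb] using hg_bound b
      _ = C * (x - b) ^ (1 + p - α) := by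
          rw [mul_assoc, ← Real.rpow_add hxb]; ring_nf
  have lim1 : Tendsto (fun b => Φ b - α * Ψ b) (𝓝[<] x) (𝓝 (Φ x - α * Ψ x)) :=
    tendstoΦ.sub (tendstoΨ.const_mul α)
  have lim2 : Tendsto (fun b => g c * (x - c) ^ (-α) - g b * (x - b) ^ (-α)) (𝓝[<] x)
      (𝓝 (g c * (x - c) ^ (-α) - 0)) := tendsto_const_nhds.sub tendsto0
  have hev : (fun b => Φ b - α * Ψ b) =ᶠ[𝓝[<] x]
      (fun b => g c * (x - c) ^ (-α) - g b * (x - b) ^ (-α)) := by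
    filter_upwards [hIoo] with b hb
    exact step b ⟨hb.1.le, hb.2⟩
  have hid : Φ x - α * Ψ x = g c * (x - c) ^ (-α) - 0 :=
    tendsto_nhds_unique (lim1.congr' hev) lim2
  -- bounds
  have hΨbound : |Ψ x| ≤ C * (x - c) ^ (1 + p - α) / (1 + p - α) := by
    have hb := intervalIntegral.norm_integral_le_of_norm_le (μ := volume) (a := c) (b := x)
      (f := fun t => g t * (x - t) ^ (-α - 1)) (g := fun t => C * (x - t) ^ (p - α)) hcx.le ?_ IρC
    · rw [intervalIntegral.integral_const_mul,
        integral_sub_rpow c x (p - α) (by linarith)] at hb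
      have he : p - α + 1 = 1 + p - α := by ring
      rw [he] at hb
      have hnn : (0:ℝ) ≤ C * ((x - c) ^ (1 + p - α) / (1 + p - α)) := by positivity
      calc |Ψ x| = ‖Ψ x‖ := (Real.norm_eq_abs _).symm
        _ ≤ C * ((x - c) ^ (1 + p - α) / (1 + p - α)) := hb
        _ = C * (x - c) ^ (1 + p - α) / (1 + p - α) := by ring
    · exact ae_of_all _ fun t ht => by rw [Real.norm_eq_abs]; exact hg_le t ht
  have hgc : |g c| ≤ C * (x - c) ^ (1 + p) := by
    have h := hg_bound c
    rwa [show |c - x| = x - c from by rw [abs_sub_comm]; exact abs_of_pos hxc0] at h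
  have hΦbound : |Φ x| ≤ L / (1 + p - α) * (x - c) ^ (1 + p - α) := by
    have hΦx : Φ x = g c * (x - c) ^ (-α) + α * Ψ x := by linarith [hid]
    have e1 : (x - c) ^ (1 + p) * (x - c) ^ (-α) = (x - c) ^ (1 + p - α) := by
      rw [← Real.rpow_add hxc0]; ring_nf
    calc |Φ x| = |g c * (x - c) ^ (-α) + α * Ψ x| := by rw [hΦx]
      _ ≤ |g c| * (x - c) ^ (-α) + α * |Ψ x| := by
          refine (abs_add_le _ _).trans ?_
          rw [abs_mul, abs_mul, abs_of_pos (Real.rpow_pos_of_pos hxc0 _), abs_of_pos hα0]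
      _ ≤ C * (x - c) ^ (1 + p) * (x - c) ^ (-α)
            + α * (C * (x - c) ^ (1 + p - α) / (1 + p - α)) := by
          gcongr
      _ = L / (1 + p - α) * (x - c) ^ (1 + p - α) := by
          rw [mul_assoc, e1, hCdef]
          field_simp
          ring
  -- assembling
  have hcap : caputo α c f x
      = (1 / Real.Gamma (1 - α)) * ∫ t in c..x, deriv f t * (x - t) ^ (-α) := by
    unfold caputo
    congr 1
    apply intervalIntegral.integral_congr
    intro t ht
    rw [uIcc_of_le hcx.le] at ht
    show deriv f t / |x - t| ^ α = deriv f t * (x - t) ^ (-α)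
    rw [abs_of_nonneg (by linarith [ht.2] : (0:ℝ) ≤ x - t),
      Real.rpow_neg (by linarith [ht.2]), div_eq_mul_inv]
  have hsplit : Φ x = deriv f x * ((x - c) ^ (1 - α) / (1 - α))
      - ∫ t in c..x, deriv f t * (x - t) ^ (-α) := by
    have hfe : (fun t => (deriv f x - deriv f t) * (x - t) ^ (-α))
        = fun t => deriv f x * (x - t) ^ (-α) - deriv f t * (x - t) ^ (-α) := by
      funext t; ring
    simp only [hΦdef]
    rw [hfe, intervalIntegral.integral_sub If1 If2, intervalIntegral.integral_const_mul,
      integral_sub_rpow c x (-α) (by linarith)]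
    ring_nf
  have hfirst : deriv f x * (x - c) / (Real.Gamma (2 - α) * |x - c| ^ α)
      = (1 / Real.Gamma (1 - α)) * (deriv f x * ((x - c) ^ (1 - α) / (1 - α))) := by
    rw [habs]
    have hΓ2 : Real.Gamma (2 - α) = (1 - α) * Real.Gamma (1 - α) := by
      have h := Real.Gamma_add_one (s := 1 - α) (by linarith)
      rw [show (2:ℝ) - α = 1 - α + 1 by ring, h]
    have hpow : (x - c) ^ ((1:ℝ) - α) = (x - c) / (x - c) ^ α := by
      rw [Real.rpow_sub hxc0, Real.rpow_one]
    rw [hΓ2, hpow]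
    have h1 : Real.Gamma (1 - α) ≠ 0 := hΓpos.ne'
    have h2 : (1:ℝ) - α ≠ 0 := by linarith
    have h3 : (x - c) ^ α ≠ 0 := (Real.rpow_pos_of_pos hxc0 α).ne'
    field_simp
  have hmain : deriv f x * (x - c) / (Real.Gamma (2 - α) * |x - c| ^ α) - caputo α c f x
      = (1 / Real.Gamma (1 - α)) * Φ x := by
    rw [hfirst, hcap, hsplit]; ring
  rw [hmain, habs, abs_mul, abs_of_pos (by positivity : (0:ℝ) < 1 / Real.Gamma (1 - α))]
  calc 1 / Real.Gamma (1 - α) * |Φ x|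
      ≤ 1 / Real.Gamma (1 - α) * (L / (1 + p - α) * (x - c) ^ (1 + p - α)) := by
        apply mul_le_mul_of_nonneg_left hΦbound (by positivity)
    _ = L / (Real.Gamma (1 - α) * (1 + p - α)) * (x - c) ^ (1 + p - α) := by
        field_simp

/-- for `(L,p)`-Hölder smooth `f`, the Caputo derivative is close to the
corresponding first-derivative expression. -/
theorem abs_firstDeriv_sub_caputo_le_of_holderSmooth (f : ℝ → ℝ) (hf : ContDiff ℝ 1 f)
    (L p : ℝ) (hL : 0 ≤ L) (hp : 0 < p) (hsmooth : HolderSmooth L p f)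
    (α : ℝ) (hα : α ∈ Set.Ioo (0 : ℝ) 1) (x c : ℝ) (hxc : x ≠ c) :
    |deriv f x * (x - c) / (Real.Gamma (2 - α) * |x - c| ^ α) - caputo α c f x| ≤
      L / (Real.Gamma (1 - α) * (1 + p - α)) * |x - c| ^ (1 + p - α) := by
  rcases hxc.lt_or_gt with hxlt | hclt
  · -- x < c : apply the key lemma to `F = f ∘ Neg.neg`
    set F : ℝ → ℝ := fun t => f (-t) with hF
    have hFc : ContDiff ℝ 1 F := hf.comp contDiff_neg
    have hd : Differentiable ℝ f := hf.differentiable one_ne_zero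
    have hderivF : ∀ t, deriv F t = -deriv f (-t) := by
      intro t
      have h : HasDerivAt F (deriv f (-t) * (-1)) t :=
        ((hd (-t)).hasDerivAt).comp t (hasDerivAt_neg t)
      simpa using h.deriv
    have hFs : HolderSmooth L p F := by
      intro a b
      rw [hderivF]
      calc |F b - F a - -deriv f (-a) * (b - a)|
          = |f (-b) - f (-a) - deriv f (-a) * (-b - -a)| := by simp only [hF]; ring_nf
        _ ≤ L / (1 + p) * |-b - -a| ^ (1 + p) := hsmooth (-a) (-b)
        _ = L / (1 + p) * |b - a| ^ (1 + p) := by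
            rw [show -b - -a = -(b - a) by ring, abs_neg]
    have key := key_lemma F hFc L p hL hp hFs α hα (-x) (-c) (by linarith)
    have e1 : caputo α (-c) F (-x) = caputo α c f x := by
      unfold caputo
      congr 1
      have e2 : ∀ t ∈ Set.uIcc (-c) (-x),
          deriv F t / |-x - t| ^ α = (fun s => -(deriv f s / |x - s| ^ α)) (-t) := by
        intro t _
        rw [hderivF, show (-x - t) = -(x - -t) by ring, abs_neg]
        ring
      rw [intervalIntegral.integral_congr e2,
        intervalIntegral.integral_comp_neg (fun s => -(deriv f s / |x - s| ^ α))]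
      simp only [neg_neg]
      rw [intervalIntegral.integral_neg, intervalIntegral.integral_symm, neg_neg]
    have e3 : deriv F (-x) * (-x - -c) = deriv f x * (x - c) := by
      rw [hderivF, neg_neg]; ring
    have e4 : |-x - -c| = |x - c| := by
      rw [show -x - -c = -(x - c) by ring, abs_neg]
    rw [e1, e4, e3] at key
    exact key
  · exact key_lemma f hf L p hL hp hsmooth α hα x c hclt
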